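/- For every index i, the function h ↦ LN_2(h)_i − u_ex(h)_i is O(h³) as h → 0 from the right; i.e., the two-stage linear-neighbour method LN2 has local truncation error of order three, so it is a second-order method (Appendix A, point C). -/

import Mathlib

open Finset NormedSpace Asymptotics

/-- `aCoef M Q v i = Σ_{j≠i} M_ij v_j + Q_i`. -/
noncomputable def aCoef {N : ℕ} (M : Matrix (Fin N) (Fin N) ℝ) (Q : Fin N → ℝ)
    (v : Fin N → ℝ) (i : Fin N) : ℝ :=
  (∑ j ∈ Finset.univ.erase i, M i j * v j) + Q i

/-- The constant-neighbour step `F_h`. -/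
noncomputable def cnStep {N : ℕ} (M : Matrix (Fin N) (Fin N) ℝ) (Q u0 : Fin N → ℝ)
    (h : ℝ) (v : Fin N → ℝ) : Fin N → ℝ :=
  fun i => u0 i * Real.exp (M i i * h)
    + (aCoef M Q v i / (-(M i i))) * (1 - Real.exp (M i i * h))

/-- The `k`-stage constant-neighbour approximation `CN_k(h) = F_h^[k] u⁰`. -/
noncomputable def CN {N : ℕ} (M : Matrix (Fin N) (Fin N) ℝ) (Q u0 : Fin N → ℝ)
    (k : ℕ) (h : ℝ) : Fin N → ℝ :=
  (cnStep M Q u0 h)^[k] u0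

/-- The effective slope `s_i(v) = (a_i(v) − a_i(u⁰))/h`. -/
noncomputable def sCoef {N : ℕ} (M : Matrix (Fin N) (Fin N) ℝ) (Q u0 : Fin N → ℝ)
    (h : ℝ) (v : Fin N → ℝ) (i : Fin N) : ℝ :=
  (aCoef M Q v i - aCoef M Q u0 i) / h

/-- The linear-neighbour step `G_h`, with `τ_i = −1/M_ii`. -/
noncomputable def lnStep {N : ℕ} (M : Matrix (Fin N) (Fin N) ℝ) (Q u0 : Fin N → ℝ)
    (h : ℝ) (v : Fin N → ℝ) : Fin N → ℝ :=
  fun i =>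
    u0 i * Real.exp (M i i * h)
      + (aCoef M Q u0 i * (-(M i i)⁻¹) - sCoef M Q u0 h v i * (-(M i i)⁻¹) ^ 2)
          * (1 - Real.exp (M i i * h))
      + sCoef M Q u0 h v i * (-(M i i)⁻¹) * h

/-- The `k`-stage linear-neighbour approximation `LN_k(h) = G_h^[k−1] (CN_1(h))`, `k ≥ 2`. -/
noncomputable def LN {N : ℕ} (M : Matrix (Fin N) (Fin N) ℝ) (Q u0 : Fin N → ℝ)
    (k : ℕ) (h : ℝ) : Fin N → ℝ :=
  (lnStep M Q u0 h)^[k - 1] (cnStep M Q u0 h u0)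

/-- The exact solution `u_ex(h) = e^{hM} u⁰ + ∫₀^h e^{(h−s)M} Q ds`. -/
noncomputable def uex {N : ℕ} (M : Matrix (Fin N) (Fin N) ℝ) (Q u0 : Fin N → ℝ)
    (h : ℝ) : Fin N → ℝ :=
  (exp (h • M)).mulVec u0 + ∫ s in (0:ℝ)..h, (exp ((h - s) • M)).mulVec Q

open Filter in
lemma exp_taylor_one (m : ℝ) :
    (fun h : ℝ => Real.exp (m*h) - (1 + m*h)) =O[nhds 0] fun h => h^2 := by
  apply IsBigO.of_bound (|m|^2)
  have hball := Metric.ball_mem_nhds (0:ℝ) (show (0:ℝ) < 1/(|m|+1) by positivity)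
  filter_upwards [hball] with h hh
  rw [Metric.mem_ball, Real.dist_eq, sub_zero] at hh
  have hmh : |m * h| ≤ 1 := by
    rw [abs_mul]
    have h1 : |m| * |h| ≤ |m| * (1/(|m|+1)) :=
      mul_le_mul_of_nonneg_left hh.le (abs_nonneg m)
    have h2 : |m| * (1/(|m|+1)) ≤ 1 := by
      rw [mul_one_div, div_le_one (by positivity)]
      linarith
    linarith
  have hb := Real.exp_bound hmh (n := 2) (by norm_num)
  simp only [Finset.sum_range_succ, Finset.sum_range_zero, pow_zero, pow_one,
    Nat.factorial] at hb
  norm_num at hb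
  have : |Real.exp (m*h) - (1 + m*h)| ≤ |m*h|^2 := by
    rw [sq_abs]; rw [← abs_mul, sq_abs] at hb; nlinarith [sq_nonneg (m*h)]
  calc ‖Real.exp (m*h) - (1 + m*h)‖ ≤ |m*h|^2 := this
    _ = |m|^2 * |h|^2 := by rw [abs_mul]; ring
    _ ≤ |m|^2 * ‖h^2‖ := by rw [Real.norm_eq_abs, abs_pow]

lemma exp_taylor_two (m : ℝ) :
    (fun h : ℝ => Real.exp (m*h) - (1 + m*h + (m*h)^2/2)) =O[nhds 0] fun h => h^3 := by
  apply IsBigO.of_bound (|m|^3)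
  have hball := Metric.ball_mem_nhds (0:ℝ) (show (0:ℝ) < 1/(|m|+1) by positivity)
  filter_upwards [hball] with h hh
  rw [Metric.mem_ball, Real.dist_eq, sub_zero] at hh
  have hmh : |m * h| ≤ 1 := by
    rw [abs_mul]
    have h1 : |m| * |h| ≤ |m| * (1/(|m|+1)) :=
      mul_le_mul_of_nonneg_left hh.le (abs_nonneg m)
    have h2 : |m| * (1/(|m|+1)) ≤ 1 := by
      rw [mul_one_div, div_le_one (by positivity)]
      linarith
    linarith
  have hb := Real.exp_bound hmh (n := 3) (by norm_num)
  simp only [Finset.sum_range_succ, Finset.sum_range_zero, pow_zero, pow_one,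
    Nat.factorial] at hb
  norm_num at hb
  have habs : |Real.exp (m*h) - (1 + m*h + (m*h)^2/2)| ≤ |m*h|^3 := by
    rw [← abs_mul] at hb; nlinarith [pow_nonneg (abs_nonneg (m*h)) 3]
  calc ‖Real.exp (m*h) - (1 + m*h + (m*h)^2/2)‖ ≤ |m*h|^3 := habs
    _ = |m|^3 * |h|^3 := by rw [abs_mul]; ring
    _ ≤ |m|^3 * ‖h^3‖ := by rw [Real.norm_eq_abs, abs_pow]

open Filter in
lemma uex_taylor {N : ℕ} (M : Matrix (Fin N) (Fin N) ℝ) (Q u0 : Fin N → ℝ) (i : Fin N) :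
    (fun h : ℝ => uex M Q u0 h i
        - (u0 i + h * ((M.mulVec u0 + Q) i) + h^2/2 * (M.mulVec (M.mulVec u0 + Q)) i))
      =O[nhds 0] fun h => h^3 := by
  letI : SeminormedRing (Matrix (Fin N) (Fin N) ℝ) := Matrix.linftyOpSemiNormedRing
  letI : NormedRing (Matrix (Fin N) (Fin N) ℝ) := Matrix.linftyOpNormedRing
  letI : NormedAlgebra ℝ (Matrix (Fin N) (Fin N) ℝ) := Matrix.linftyOpNormedAlgebra
  have hrad : 0 < (expSeries ℝ (Matrix (Fin N) (Fin N) ℝ)).radius := by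
    exact expSeries_radius_pos ℝ _
  have hps := hasFPowerSeriesAt_exp_zero_of_radius_pos (𝕂 := ℝ) hrad
  have hcont : Continuous fun h : ℝ => h • M := continuous_id.smul continuous_const
  have hc : Filter.Tendsto (fun h : ℝ => h • M) (nhds 0) (nhds 0) := by
    simpa using hcont.tendsto 0
  -- cubic expansion of exp (h • M)
  have H3 := (hps.isBigO_sub_partialSum_pow 3).comp_tendsto hc
  have hnorm3 : (fun h : ℝ => ‖h • M‖^3) =O[nhds 0] fun h => h^3 := by
    apply IsBigO.of_bound (‖M‖^3)
    filter_upwards with h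
    have h1 : ‖h • M‖ = |h| * ‖M‖ := by rw [norm_smul, Real.norm_eq_abs]
    calc ‖‖h • M‖^3‖ = (|h| * ‖M‖)^3 := by
            rw [Real.norm_eq_abs, abs_of_nonneg (by positivity), h1]
      _ = ‖M‖^3 * |h|^3 := by ring
      _ = ‖M‖^3 * ‖h^3‖ := by rw [Real.norm_eq_abs, abs_pow]
      _ ≤ ‖M‖^3 * ‖h^3‖ := le_rfl
  have hexp : (fun h : ℝ => exp (h • M) - (1 + h • M + (h^2/2) • (M*M)))
      =O[nhds 0] fun h => h^3 := by
    refine ((H3.congr_left ?_).trans hnorm3)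
    intro h
    have hps3 : (expSeries ℝ (Matrix (Fin N) (Fin N) ℝ)).partialSum 3 (h • M)
        = 1 + h • M + (h^2/2) • (M*M) := by
      simp only [FormalMultilinearSeries.partialSum, Finset.sum_range_succ,
        Finset.sum_range_zero, expSeries_apply_eq, Nat.factorial]
      rw [pow_zero, pow_one, pow_two, smul_mul_smul_comm, smul_smul]
      norm_num
      rw [smul_smul]
      norm_num
      ring_nf
    simp only [Function.comp_apply, zero_add]
    exact congrArg (fun y => exp (h • M) - y) hps3
  -- vector version of the exponential part
  have hvec : (fun h : ℝ => (exp (h • M)).mulVec u0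
      - (u0 + h • M.mulVec u0 + (h^2/2) • (M*M).mulVec u0)) =O[nhds 0] fun h => h^3 := by
    have heq : ∀ h : ℝ, (exp (h • M)).mulVec u0
        - (u0 + h • M.mulVec u0 + (h^2/2) • (M*M).mulVec u0)
        = (exp (h • M) - (1 + h • M + (h^2/2) • (M*M))).mulVec u0 := by
      intro h
      rw [Matrix.sub_mulVec, Matrix.add_mulVec, Matrix.add_mulVec, Matrix.one_mulVec,
        Matrix.smul_mulVec, Matrix.smul_mulVec]
    have hO : (fun h : ℝ => (exp (h • M) - (1 + h • M + (h^2/2) • (M*M))).mulVec u0)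
        =O[nhds 0] fun h => exp (h • M) - (1 + h • M + (h^2/2) • (M*M)) := by
      apply IsBigO.of_bound ‖u0‖
      filter_upwards with h
      rw [mul_comm]
      exact Matrix.linfty_opNorm_mulVec _ _
    simp only [heq]
    exact hO.trans hexp
  -- the integral part
  have hquad := (hps.isBigO_sub_partialSum_pow 2).isBigOWith
  obtain ⟨C, hC⟩ := hquad
  rw [isBigOWith_iff, Metric.eventually_nhds_iff] at hC
  obtain ⟨ε, hε, hCb⟩ := hC
  have hps2 : ∀ y : Matrix (Fin N) (Fin N) ℝ,
      (expSeries ℝ (Matrix (Fin N) (Fin N) ℝ)).partialSum 2 y = 1 + y := by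
    intro y
    simp [FormalMultilinearSeries.partialSum, Finset.sum_range_succ, expSeries_apply_eq,
      Nat.factorial]
  have hgcont : Continuous fun s : ℝ => (exp (s • M)).mulVec Q :=
    ((continuous_iff_continuousAt.mpr fun x => (exp_analytic (𝕂 := ℝ) x).continuousAt).comp hcont).matrix_mulVec continuous_const
  have hint : (fun h : ℝ => (∫ s in (0:ℝ)..h, (exp ((h - s) • M)).mulVec Q)
      - (h • Q + (h^2/2) • M.mulVec Q)) =O[nhds 0] fun h => h^3 := by
    apply IsBigO.of_bound (|C| * ‖M‖^2 * ‖Q‖)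
    have hδ : (0:ℝ) < ε / (‖M‖ + 1) := by positivity
    filter_upwards [Metric.ball_mem_nhds (0:ℝ) hδ] with h hh
    rw [Metric.mem_ball, Real.dist_eq, sub_zero] at hh
    -- rewrite the integral
    have h1 : (∫ s in (0:ℝ)..h, (exp ((h - s) • M)).mulVec Q)
        = ∫ s in (0:ℝ)..h, (exp (s • M)).mulVec Q := by
      have := intervalIntegral.integral_comp_sub_left (a := (0:ℝ)) (b := h)
        (fun s => (exp (s • M)).mulVec Q) h
      simpa using this
    have h2 : (∫ s in (0:ℝ)..h, (exp (s • M)).mulVec Q) - (h • Q + (h^2/2) • M.mulVec Q)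
        = ∫ s in (0:ℝ)..h, ((exp (s • M) - 1 - s • M).mulVec Q) := by
      have heq2 : ∀ s : ℝ, (exp (s • M) - 1 - s • M).mulVec Q
          = (exp (s • M)).mulVec Q - (Q + s • M.mulVec Q) := by
        intro s
        rw [Matrix.sub_mulVec, Matrix.sub_mulVec, Matrix.one_mulVec,
          Matrix.smul_mulVec]
        abel
      have hc3 : Continuous fun s : ℝ => s • M.mulVec Q :=
        continuous_id'.smul continuous_const
      have hc2 : Continuous fun s : ℝ => Q + s • M.mulVec Q := continuous_const.add hc3
      simp only [heq2]
      rw [intervalIntegral.integral_sub (hgcont.intervalIntegrable 0 h)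
        (hc2.intervalIntegrable 0 h)]
      rw [intervalIntegral.integral_add (continuous_const.intervalIntegrable 0 h)
        (hc3.intervalIntegrable 0 h)]
      rw [intervalIntegral.integral_const]
      have h3 : (∫ s in (0:ℝ)..h, s • M.mulVec Q) = (h^2/2) • M.mulVec Q := by
        rw [intervalIntegral.integral_smul_const, integral_id]
        norm_num
      rw [h3]
      simp
    rw [h1, h2]
    have hbound : ∀ s ∈ Set.uIoc (0:ℝ) h,
        ‖(exp (s • M) - 1 - s • M).mulVec Q‖ ≤ (|C| * (‖M‖ * |h|)^2) * ‖Q‖ := by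
      intro s hs
      have hsh : |s| ≤ |h| := by
        rcases Set.mem_uIoc.mp hs with ⟨hs1, hs2⟩ | ⟨hs1, hs2⟩
        · exact abs_le.mpr ⟨by nlinarith [abs_nonneg h], hs2.trans (le_abs_self h)⟩
        · exact abs_le.mpr ⟨by nlinarith [le_abs_self h, neg_abs_le h], by nlinarith [le_abs_self h, neg_abs_le h]⟩
      have hsM : dist (s • M) 0 < ε := by
        rw [dist_zero_right, norm_smul, Real.norm_eq_abs]
        calc |s| * ‖M‖ ≤ |h| * ‖M‖ := mul_le_mul_of_nonneg_right hsh (norm_nonneg M)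
          _ < ε := by
              have := (lt_div_iff₀ (by positivity : (0:ℝ) < ‖M‖ + 1)).mp hh
              nlinarith [abs_nonneg h, norm_nonneg M]
      have hb := hCb hsM
      rw [zero_add] at hb
      replace hb : ‖exp (s • M) - (1 + s • M)‖ ≤ C * ‖‖s • M‖^2‖ := by
        rw [← hps2 (s • M)]; exact hb
      have hb2 : ‖exp (s • M) - 1 - s • M‖ ≤ |C| * (‖M‖ * |h|)^2 := by
        have : exp (s • M) - 1 - s • M = exp (s • M) - (1 + s • M) := by abel
        rw [this]
        calc ‖exp (s • M) - (1 + s • M)‖ ≤ C * ‖‖s • M‖^2‖ := hb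
          _ ≤ |C| * ‖s • M‖^2 := by
              rw [Real.norm_eq_abs, abs_of_nonneg (by positivity)]
              exact mul_le_mul_of_nonneg_right (le_abs_self C) (by positivity)
          _ ≤ |C| * (‖M‖ * |h|)^2 := by
              apply mul_le_mul_of_nonneg_left _ (abs_nonneg C)
              rw [norm_smul, Real.norm_eq_abs]
              apply pow_le_pow_left₀ (by positivity)
              calc |s| * ‖M‖ ≤ |h| * ‖M‖ := mul_le_mul_of_nonneg_right hsh (norm_nonneg M)
                _ = ‖M‖ * |h| := mul_comm _ _
      calc ‖(exp (s • M) - 1 - s • M).mulVec Q‖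
          ≤ ‖exp (s • M) - 1 - s • M‖ * ‖Q‖ := Matrix.linfty_opNorm_mulVec _ _
        _ ≤ (|C| * (‖M‖ * |h|)^2) * ‖Q‖ :=
            mul_le_mul_of_nonneg_right hb2 (norm_nonneg Q)
    calc ‖∫ s in (0:ℝ)..h, ((exp (s • M) - 1 - s • M).mulVec Q)‖
        ≤ (|C| * (‖M‖ * |h|)^2) * ‖Q‖ * |h - 0| :=
          intervalIntegral.norm_integral_le_of_norm_le_const hbound
      _ = |C| * ‖M‖^2 * ‖Q‖ * (|h|^3) := by rw [sub_zero]; ring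
      _ = |C| * ‖M‖^2 * ‖Q‖ * ‖h^3‖ := by rw [Real.norm_eq_abs, abs_pow]
  -- combine
  have hsum := hvec.add hint
  have hcomp : (fun h : ℝ => uex M Q u0 h i
      - (u0 i + h * ((M.mulVec u0 + Q) i) + h^2/2 * (M.mulVec (M.mulVec u0 + Q)) i))
      =O[nhds 0] (fun h : ℝ => ((exp (h • M)).mulVec u0
        - (u0 + h • M.mulVec u0 + (h^2/2) • (M*M).mulVec u0))
        + ((∫ s in (0:ℝ)..h, (exp ((h - s) • M)).mulVec Q)
          - (h • Q + (h^2/2) • M.mulVec Q))) := by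
    apply isBigO_of_le
    intro h
    have heval : uex M Q u0 h i
        - (u0 i + h * ((M.mulVec u0 + Q) i) + h^2/2 * (M.mulVec (M.mulVec u0 + Q)) i)
        = (((exp (h • M)).mulVec u0
            - (u0 + h • M.mulVec u0 + (h^2/2) • (M*M).mulVec u0))
          + ((∫ s in (0:ℝ)..h, (exp ((h - s) • M)).mulVec Q)
            - (h • Q + (h^2/2) • M.mulVec Q))) i := by
      simp only [uex, Pi.add_apply, Pi.sub_apply, Pi.smul_apply, smul_eq_mul,
        Matrix.mulVec_add, ← Matrix.mulVec_mulVec]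
      ring
    rw [heval]
    exact norm_le_pi_norm _ i
  exact hcomp.trans hsum

open Filter in
lemma ln2_taylor {N : ℕ} (M : Matrix (Fin N) (Fin N) ℝ) (hM : ∀ i, M i i < 0)
    (Q u0 : Fin N → ℝ) (i : Fin N) :
    (fun h : ℝ => LN M Q u0 2 h i
        - (u0 i + h * ((M.mulVec u0 + Q) i) + h^2/2 * (M.mulVec (M.mulVec u0 + Q)) i))
      =O[nhdsWithin 0 (Set.Ioi 0)] fun h => h^3 := by
  have hm : ∀ j, M j j ≠ 0 := fun j => (hM j).ne
  set m := M i i with hmdef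
  have hm0 : m ≠ 0 := hm i
  set a0 := aCoef M Q u0 i with ha0
  set u1 : Fin N → ℝ := M.mulVec u0 + Q with hu1def
  set w : Fin N → ℝ := fun j => aCoef M Q u0 j / (-(M j j)) - u0 j with hwdef
  have hu1 : ∀ j, u1 j = M j j * u0 j + aCoef M Q u0 j := by
    intro j
    rw [hu1def]
    simp only [Pi.add_apply, Matrix.mulVec, dotProduct, aCoef]
    rw [← Finset.add_sum_erase _ _ (Finset.mem_univ j)]
    ring
  have hmw : ∀ j, M j j * w j = - u1 j := by
    intro j; rw [hwdef, hu1 j]; field_simp [hm j]; ring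
  set G : ℝ → ℝ :=
    fun h => ∑ j ∈ Finset.univ.erase i, M i j * ((1 - Real.exp (M j j * h)) * w j) with hGdef
  have hGeq : ∀ h : ℝ, aCoef M Q (cnStep M Q u0 h u0) i - a0 = G h := by
    intro h
    rw [hGdef, ha0]
    simp only [aCoef, add_sub_add_right_eq_sub, ← Finset.sum_sub_distrib]
    refine Finset.sum_congr rfl fun j hj => ?_
    simp only [cnStep, hwdef]
    ring
  set r : ℝ := ∑ j ∈ Finset.univ.erase i, M i j * u1 j with hrdef
  have hu2i : (M.mulVec u1) i = m * u1 i + r := by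
    simp only [Matrix.mulVec, dotProduct, hrdef]
    rw [← Finset.add_sum_erase _ _ (Finset.mem_univ i)]
  have hGr : (fun h : ℝ => G h - h * r) =O[nhds 0] fun h => h^2 := by
    have heq : ∀ h : ℝ, G h - h * r
        = ∑ j ∈ Finset.univ.erase i,
            (-(M i j * w j)) * (Real.exp (M j j * h) - (1 + M j j * h)) := by
      intro h
      rw [hGdef, hrdef, Finset.mul_sum, ← Finset.sum_sub_distrib]
      refine Finset.sum_congr rfl fun j hj => ?_
      linear_combination (-(M i j * h)) * hmw j
    simp only [heq]
    exact (IsBigO.sum fun j hj => (exp_taylor_one (M j j)).const_mul_left (-(M i j * w j))).congr_left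
      fun h => Finset.sum_apply h _ _
  -- slope minus r is O(h) on the right filter
  have hSr : (fun h : ℝ => G h / h - r) =O[nhdsWithin 0 (Set.Ioi 0)] fun h => h := by
    rw [isBigO_iff] at hGr
    obtain ⟨C, hC⟩ := hGr
    apply IsBigO.of_bound C
    filter_upwards [hC.filter_mono nhdsWithin_le_nhds, self_mem_nhdsWithin] with h hb hh
    have hh0 : (0:ℝ) < h := hh
    have hne : h ≠ 0 := hh0.ne'
    have heq : G h / h - r = (G h - h * r) / h := by field_simp
    simp only [Real.norm_eq_abs] at hb ⊢
    rw [heq, abs_div, abs_of_pos hh0]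
    rw [abs_of_nonneg (sq_nonneg h)] at hb
    calc |G h - h * r| / h ≤ (C * h^2) / h := by gcongr
      _ = C * h := by field_simp
  set Dq : ℝ → ℝ := fun h => (-m⁻¹) * h - (-m⁻¹)^2 * (1 - Real.exp (m*h)) with hDqdef
  have hDq2 : Dq =O[nhds 0] fun h => h^2 := by
    have heq : ∀ h : ℝ, Dq h = (m⁻¹)^2 * (Real.exp (m*h) - (1 + m*h)) := by
      intro h; rw [hDqdef]; field_simp; ring
    exact ((exp_taylor_one m).const_mul_left ((m⁻¹)^2)).congr_left fun h => (heq h).symm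
  have hDq3 : (fun h : ℝ => Dq h - h^2/2) =O[nhds 0] fun h => h^3 := by
    have heq : ∀ h : ℝ, Dq h - h^2/2
        = (m⁻¹)^2 * (Real.exp (m*h) - (1 + m*h + (m*h)^2/2)) := by
      intro h; rw [hDqdef]; field_simp; ring
    simp only [heq]
    exact (exp_taylor_two m).const_mul_left _
  -- the main algebraic decomposition
  have hmain : ∀ h : ℝ, LN M Q u0 2 h i
      - (u0 i + h * u1 i + h^2/2 * (M.mulVec u1) i)
      = u0 i * (Real.exp (m*h) - (1 + m*h + (m*h)^2/2))
        + (a0/m) * (Real.exp (m*h) - (1 + m*h + (m*h)^2/2))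
        + (G h / h - r) * Dq h
        + r * (Dq h - h^2/2) := by
    intro h
    have hLN : LN M Q u0 2 h i = lnStep M Q u0 h (cnStep M Q u0 h u0) i := by
      rw [LN]; norm_num
    rw [hLN, hu2i, hu1 i, ← ha0, ← hmdef]
    simp only [lnStep, sCoef, ← ha0, hGeq h, ← hmdef, hDqdef]
    generalize G h / h = S
    field_simp
    ring
  simp only [hu1def] at hmain
  simp only [hu1def, hmain]
  have h1 : (fun h : ℝ => u0 i * (Real.exp (m*h) - (1 + m*h + (m*h)^2/2)))
      =O[nhdsWithin 0 (Set.Ioi 0)] fun h => h^3 :=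
    ((exp_taylor_two m).const_mul_left _).mono nhdsWithin_le_nhds
  have h2 : (fun h : ℝ => (a0/m) * (Real.exp (m*h) - (1 + m*h + (m*h)^2/2)))
      =O[nhdsWithin 0 (Set.Ioi 0)] fun h => h^3 :=
    ((exp_taylor_two m).const_mul_left _).mono nhdsWithin_le_nhds
  have h3 : (fun h : ℝ => (G h / h - r) * Dq h)
      =O[nhdsWithin 0 (Set.Ioi 0)] fun h => h^3 := by
    have := hSr.mul (hDq2.mono nhdsWithin_le_nhds)
    refine this.trans (IsBigO.of_bound 1 ?_)
    filter_upwards with h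
    simp [pow_succ, abs_mul, mul_assoc]
  have h4 : (fun h : ℝ => r * (Dq h - h^2/2))
      =O[nhdsWithin 0 (Set.Ioi 0)] fun h => h^3 :=
    (hDq3.const_mul_left _).mono nhdsWithin_le_nhds
  exact ((h1.add h2).add h3).add h4

/-- Appendix A, point C: the two-stage linear-neighbour method LN₂ has local
truncation error `O(h³)` as `h → 0⁺`, i.e. it is a second-order method. -/
theorem ln2_second_order {N : ℕ} (hN : 1 ≤ N) (M : Matrix (Fin N) (Fin N) ℝ)
    (hM : ∀ i, M i i < 0) (Q u0 : Fin N → ℝ) (i : Fin N) :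
    (fun h : ℝ => LN M Q u0 2 h i - uex M Q u0 h i)
      =O[nhdsWithin 0 (Set.Ioi 0)] fun h : ℝ => h ^ 3 := by
  have hA := ln2_taylor M hM Q u0 i
  have hB : (fun h : ℝ => uex M Q u0 h i - (u0 i + h * ((M.mulVec u0 + Q) i)
      + h^2/2 * (M.mulVec (M.mulVec u0 + Q)) i))
      =O[nhdsWithin 0 (Set.Ioi 0)] fun h : ℝ => h^3 :=
    (uex_taylor M Q u0 i).mono nhdsWithin_le_nhds
  exact (hA.sub hB).congr_left fun h => by ring
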